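/- In a connected weighted graph where every vertex cut separating cells containing a common element v splits the k cells containing v into groups of sizes m and k−m (1 ≤ m ≤ k−1), the cut weight is at least m(k−m) ≥ k−1. Combined with Cheeger's inequality λ₂ ≥ h²/2, the second-smallest eigenvalue of the normalized Laplacian satisfies λ₂ ≥ 2/(k²|V|²). -/

import Mathlib

open SimpleGraph Finset

lemma aux_subwalk {V : Type*} {G : SimpleGraph V} {u v : V} (p : G.Walk u v) :
    ∀ t s : ℕ, t ≤ s → s ≤ p.length →
      ∃ q : G.Walk (p.getVert t) (p.getVert s), q.length = s - t := by
  induction p with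
  | nil =>
    intro t s hts hs
    simp only [SimpleGraph.Walk.length_nil, Nat.le_zero] at hs
    subst hs
    have ht : t = 0 := Nat.le_zero.mp hts
    subst ht
    exact ⟨SimpleGraph.Walk.nil, rfl⟩
  | cons h p ih =>
    intro t s hts hs
    match t, s with
    | 0, 0 => exact ⟨SimpleGraph.Walk.nil, rfl⟩
    | 0, s + 1 =>
      obtain ⟨q, hq⟩ := ih 0 s (Nat.zero_le _) (by simpa using hs)
      refine ⟨(SimpleGraph.Walk.cons h (q.copy (p.getVert_zero) rfl)).copy
        (SimpleGraph.Walk.getVert_zero _).symm rfl, ?_⟩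
      simp [hq]
    | t + 1, s + 1 =>
      obtain ⟨q, hq⟩ := ih t s (Nat.succ_le_succ_iff.mp hts) (by simpa using hs)
      exact ⟨q, hq.trans (Nat.add_sub_add_right s 1 t).symm⟩

lemma aux_dist_getVert {V : Type*} {G : SimpleGraph V} (hconn : G.Connected) {u v : V}
    (p : G.Walk u v) (hp : p.length = G.dist u v) {t s : ℕ} (hts : t ≤ s) (hs : s ≤ p.length) :
    G.dist (p.getVert t) (p.getVert s) = s - t := by
  obtain ⟨q, hq⟩ := aux_subwalk p t s hts hs
  have h1 : G.dist (p.getVert t) (p.getVert s) ≤ s - t := hq ▸ SimpleGraph.dist_le q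
  obtain ⟨q1, hq1⟩ := aux_subwalk p 0 t (Nat.zero_le _) (le_trans hts hs)
  obtain ⟨q2, hq2⟩ := aux_subwalk p s p.length hs le_rfl
  have h2 : G.dist u (p.getVert t) ≤ t := by
    have := SimpleGraph.dist_le (q1.copy (p.getVert_zero) rfl)
    simpa [hq1] using this
  have h3 : G.dist (p.getVert s) v ≤ p.length - s := by
    have := SimpleGraph.dist_le (q2.copy rfl (p.getVert_length))
    simpa [hq2] using this
  have h4 := hconn.dist_triangle (u := u) (v := p.getVert t) (w := v)
  have h5 := hconn.dist_triangle (u := p.getVert t) (v := p.getVert s) (w := v)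
  omega

lemma aux_pair_bound {V ι : Type*} [Fintype V] [Fintype ι] [DecidableEq V] [DecidableEq ι]
    (A : ι → Finset V)
    (hconn : (SimpleGraph.fromRel fun i j : ι => (A i ∩ A j).Nonempty).Connected)
    (y : ι → ℝ) (i j : ι) :
    (y i - y j) ^ 2 ≤ (Fintype.card V : ℝ) *
      ((∑ a : ι, ∑ b : ι, ((A a ∩ A b).card : ℝ) * (y a - y b) ^ 2) / 2) := by
  classical
  set G := (SimpleGraph.fromRel fun i j : ι => (A i ∩ A j).Nonempty) with hG
  set Q : ℝ := ∑ a : ι, ∑ b : ι, ((A a ∩ A b).card : ℝ) * (y a - y b) ^ 2 with hQdef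
  have hQ0 : 0 ≤ Q := by
    apply Finset.sum_nonneg; intro a _; apply Finset.sum_nonneg; intro b _; positivity
  obtain ⟨p, hp⟩ := hconn.exists_walk_length_eq_dist i j
  set ℓ := p.length with hℓ
  set vt : ℕ → ι := p.getVert with hvt
  have hdist : ∀ t s : ℕ, t ≤ s → s ≤ ℓ → G.dist (vt t) (vt s) = s - t := by
    intro t s h1 h2; exact aux_dist_getVert hconn p hp h1 h2
  have hinj : ∀ t s : ℕ, t ≤ ℓ → s ≤ ℓ → vt t = vt s → t = s := by
    intro t s ht hs heq
    rcases lt_trichotomy t s with h | h | h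
    · have := hdist t s h.le hs; rw [heq, SimpleGraph.dist_self] at this; omega
    · exact h
    · have := hdist s t h.le ht; rw [heq, SimpleGraph.dist_self] at this; omega
  have hnadj : ∀ t s : ℕ, t + 2 ≤ s → s ≤ ℓ → ¬ G.Adj (vt t) (vt s) := by
    intro t s h1 h2 had
    have := (SimpleGraph.dist_eq_one_iff_adj).mpr had
    rw [hdist t s (by omega) h2] at this; omega
  have hadj_t : ∀ t : ℕ, t < ℓ → (A (vt t) ∩ A (vt (t + 1))).Nonempty := by
    intro t ht
    have had : G.Adj (vt t) (vt (t + 1)) := p.adj_getVert_succ ht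
    rw [hG, SimpleGraph.fromRel_adj] at had
    rcases had.2 with h | h
    · exact h
    · rwa [Finset.inter_comm] at h
  -- the edge sets are pairwise disjoint
  set B : ℕ → Finset V := fun t => A (vt t) ∩ A (vt (t + 1)) with hB
  have hBdisj' : ∀ t s : ℕ, t < s → s + 1 ≤ ℓ → Disjoint (B t) (B s) := by
    intro t s hts hs
    rw [Finset.disjoint_left]
    intro v hv1 hv2
    have hv1a : v ∈ A (vt t) := (Finset.mem_inter.mp hv1).1
    have hv2b : v ∈ A (vt (s + 1)) := (Finset.mem_inter.mp hv2).2
    have hne : vt t ≠ vt (s + 1) := fun h => by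
      have := hinj t (s + 1) (by omega) hs h; omega
    have : G.Adj (vt t) (vt (s + 1)) := by
      rw [hG, SimpleGraph.fromRel_adj]
      exact ⟨hne, Or.inl ⟨v, Finset.mem_inter.mpr ⟨hv1a, hv2b⟩⟩⟩
    exact hnadj t (s + 1) (by omega) hs this
  have hBdisj : ∀ t ∈ Finset.range ℓ, ∀ s ∈ Finset.range ℓ, t ≠ s → Disjoint (B t) (B s) := by
    intro t ht s hs hne
    rw [Finset.mem_range] at ht hs
    rcases lt_or_gt_of_ne hne with h | h
    · exact hBdisj' t s h (by omega)
    · exact (hBdisj' s t h (by omega)).symm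
  have hlen : ℓ ≤ Fintype.card V := by
    calc ℓ = ∑ t ∈ Finset.range ℓ, 1 := by simp
    _ ≤ ∑ t ∈ Finset.range ℓ, (B t).card := by
        apply Finset.sum_le_sum; intro t ht
        exact Finset.card_pos.mpr (hadj_t t (Finset.mem_range.mp ht))
    _ = ((Finset.range ℓ).biUnion B).card := (Finset.card_biUnion hBdisj).symm
    _ ≤ Fintype.card V := Finset.card_le_univ _
  -- telescoping + Cauchy-Schwarz
  have htel : y i - y j = ∑ t ∈ Finset.range ℓ, (y (vt t) - y (vt (t + 1))) := by
    rw [Finset.sum_range_sub' (fun t => y (vt t)) ℓ]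
    simp [hvt, hℓ]
  have hcs : (y i - y j) ^ 2 ≤
      (ℓ : ℝ) * ∑ t ∈ Finset.range ℓ, (y (vt t) - y (vt (t + 1))) ^ 2 := by
    rw [htel]
    have := sq_sum_le_card_mul_sum_sq (s := Finset.range ℓ)
      (f := fun t => y (vt t) - y (vt (t + 1)))
    simpa using this
  -- edge sum is at most Q/2
  have hedge : ∑ t ∈ Finset.range ℓ, (y (vt t) - y (vt (t + 1))) ^ 2 ≤ Q / 2 := by
    have hstep1 : ∑ t ∈ Finset.range ℓ, (y (vt t) - y (vt (t + 1))) ^ 2 ≤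
        ∑ t ∈ Finset.range ℓ, ((A (vt t) ∩ A (vt (t + 1))).card : ℝ) *
          (y (vt t) - y (vt (t + 1))) ^ 2 := by
      apply Finset.sum_le_sum
      intro t ht
      have h1 : (1 : ℝ) ≤ ((A (vt t) ∩ A (vt (t + 1))).card : ℝ) := by
        have := Finset.card_pos.mpr (hadj_t t (Finset.mem_range.mp ht))
        exact_mod_cast this
      nlinarith [sq_nonneg (y (vt t) - y (vt (t + 1)))]
    set g : ι × ι → ℝ := fun q => ((A q.1 ∩ A q.2).card : ℝ) * (y q.1 - y q.2) ^ 2 with hg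
    have hg0 : ∀ q : ι × ι, 0 ≤ g q := by intro q; positivity
    have hQg : Q = ∑ q : ι × ι, g q := by
      rw [hQdef, ← Finset.univ_product_univ, Finset.sum_product]
    set F1 : Finset (ι × ι) := (Finset.range ℓ).image (fun t => (vt t, vt (t + 1))) with hF1
    set F2 : Finset (ι × ι) := (Finset.range ℓ).image (fun t => (vt (t + 1), vt t)) with hF2
    have hinj1 : ∀ t ∈ Finset.range ℓ, ∀ s ∈ Finset.range ℓ,
        (vt t, vt (t + 1)) = (vt s, vt (s + 1)) → t = s := by
      intro t ht s hs h
      rw [Finset.mem_range] at ht hs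
      exact hinj t s (by omega) (by omega) (congrArg Prod.fst h)
    have hinj2 : ∀ t ∈ Finset.range ℓ, ∀ s ∈ Finset.range ℓ,
        (vt (t + 1), vt t) = (vt (s + 1), vt s) → t = s := by
      intro t ht s hs h
      rw [Finset.mem_range] at ht hs
      exact hinj t s (by omega) (by omega) (congrArg Prod.snd h)
    have hsum1 : ∑ q ∈ F1, g q = ∑ t ∈ Finset.range ℓ,
        ((A (vt t) ∩ A (vt (t + 1))).card : ℝ) * (y (vt t) - y (vt (t + 1))) ^ 2 :=
      Finset.sum_image hinj1
    have hsum2 : ∑ q ∈ F2, g q = ∑ t ∈ Finset.range ℓ,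
        ((A (vt t) ∩ A (vt (t + 1))).card : ℝ) * (y (vt t) - y (vt (t + 1))) ^ 2 := by
      rw [Finset.sum_image hinj2]
      apply Finset.sum_congr rfl
      intro t _
      simp only [hg]
      rw [Finset.inter_comm]
      ring
    have hdisjF : Disjoint F1 F2 := by
      rw [Finset.disjoint_left]
      intro q hq1 hq2
      rw [hF1, Finset.mem_image] at hq1
      rw [hF2, Finset.mem_image] at hq2
      obtain ⟨t, ht, hqt⟩ := hq1
      obtain ⟨s, hs, hqs⟩ := hq2
      rw [Finset.mem_range] at ht hs
      rw [← hqs] at hqt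
      have e1 : vt t = vt (s + 1) := congrArg Prod.fst hqt
      have e2 : vt (t + 1) = vt s := congrArg Prod.snd hqt
      have := hinj t (s + 1) (by omega) (by omega) e1
      have := hinj (t + 1) s (by omega) (by omega) e2
      omega
    have hsub : ∑ q ∈ F1 ∪ F2, g q ≤ ∑ q : ι × ι, g q :=
      Finset.sum_le_sum_of_subset_of_nonneg (Finset.subset_univ _) (fun q _ _ => hg0 q)
    rw [Finset.sum_union hdisjF, hsum1, hsum2, ← hQg] at hsub
    linarith
  calc (y i - y j) ^ 2 ≤ (ℓ : ℝ) * ∑ t ∈ Finset.range ℓ, (y (vt t) - y (vt (t + 1))) ^ 2 := hcs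
  _ ≤ (Fintype.card V : ℝ) * (Q / 2) := by
      apply mul_le_mul (by exact_mod_cast hlen) hedge
        (Finset.sum_nonneg fun t _ => sq_nonneg _) (by positivity)


/-- in the connected cell-intersection graph (vertices: cells
`A i`, edge weights `|A i ∩ A j|`, every element of `V` in exactly `k` cells),
every nontrivial cut splitting the `k` cells containing a common element `v`
into groups of sizes `m` and `k-m` has weight at least `m(k-m) ≥ k-1`, and the
second-smallest eigenvalue of the normalized Laplacian (characterized by the
Rayleigh quotient over vectors orthogonal to the `√|Aᵢ|` vector) satisfies
`λ₂ ≥ 2/(k²|V|²)`. -/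
theorem stmt_17 {V ι : Type*} [Fintype V] [Fintype ι] [DecidableEq ι]
    [Nonempty ι] [DecidableEq V]
    (A : ι → Finset V) (k : ℕ) (hk : 2 ≤ k)
    (hreg : ∀ v : V, (Finset.univ.filter fun i => v ∈ A i).card = k)
    (hconn : (SimpleGraph.fromRel fun i j : ι => (A i ∩ A j).Nonempty).Connected)
    (L : ι → ι → ℝ)
    (hL : ∀ i j, L i j = if i = j then 1
      else -(1 / ((k : ℝ) - 1)) * ((A i ∩ A j).card : ℝ) /
            Real.sqrt (((A i).card : ℝ) * ((A j).card : ℝ))) :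
    (∀ U : Finset ι, U.Nonempty → U ≠ Finset.univ →
      ∀ v : V, ∀ m : ℕ, m = (U.filter fun i => v ∈ A i).card →
        1 ≤ m → m ≤ k - 1 →
          ((m * (k - m) : ℕ) : ℝ) ≤ ∑ i ∈ U, ∑ j ∈ Uᶜ, ((A i ∩ A j).card : ℝ) ∧
          ((k : ℝ) - 1 ≤ ((m * (k - m) : ℕ) : ℝ))) ∧
    (∀ x : ι → ℝ, (∑ i : ι, Real.sqrt ((A i).card : ℝ) * x i = 0) →
      (2 / ((k : ℝ) ^ 2 * (Fintype.card V : ℝ) ^ 2)) * ∑ i : ι, (x i) ^ 2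
        ≤ ∑ i : ι, ∑ j : ι, x i * L i j * x j) := by
  classical
  constructor
  · -- Part 1: the cut bound
    intro U hUne hUuniv v m hm h1m hmk1
    have hk1 : 1 ≤ k := by omega
    have hmk : m ≤ k := by omega
    constructor
    · set P := U.filter (fun i => v ∈ A i) with hP
      set Qc := Uᶜ.filter (fun i => v ∈ A i) with hQc
      have hunion : P ∪ Qc = Finset.univ.filter (fun i => v ∈ A i) := by
        rw [hP, hQc, ← Finset.filter_union, Finset.union_compl]
      have hdisj : Disjoint P Qc :=
        Finset.disjoint_filter_filter disjoint_compl_right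
      have hcards : P.card + Qc.card = k := by
        rw [← Finset.card_union_of_disjoint hdisj, hunion, hreg v]
      have hPcard : P.card = m := hm.symm
      have hQcard : Qc.card = k - m := by omega
      have hw0 : ∀ i j : ι, (0:ℝ) ≤ ((A i ∩ A j).card : ℝ) := by
        intro i j; exact Nat.cast_nonneg _
      calc ((m * (k - m) : ℕ) : ℝ) = ∑ _i ∈ P, ∑ _j ∈ Qc, (1:ℝ) := by
            simp [hPcard, hQcard]
      _ ≤ ∑ i ∈ P, ∑ j ∈ Qc, ((A i ∩ A j).card : ℝ) := by
            apply Finset.sum_le_sum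
            intro i hi
            apply Finset.sum_le_sum
            intro j hj
            have hvi : v ∈ A i := (Finset.mem_filter.mp hi).2
            have hvj : v ∈ A j := (Finset.mem_filter.mp hj).2
            have : 0 < (A i ∩ A j).card :=
              Finset.card_pos.mpr ⟨v, Finset.mem_inter.mpr ⟨hvi, hvj⟩⟩
            exact_mod_cast this
      _ ≤ ∑ i ∈ P, ∑ j ∈ Uᶜ, ((A i ∩ A j).card : ℝ) := by
            apply Finset.sum_le_sum
            intro i _
            exact Finset.sum_le_sum_of_subset_of_nonneg (Finset.filter_subset _ _)
              (fun j _ _ => hw0 i j)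
      _ ≤ ∑ i ∈ U, ∑ j ∈ Uᶜ, ((A i ∩ A j).card : ℝ) := by
            apply Finset.sum_le_sum_of_subset_of_nonneg (Finset.filter_subset _ _)
            intro i _ _
            exact Finset.sum_nonneg fun j _ => hw0 i j
    · have hcast : ((m * (k - m) : ℕ) : ℝ) = (m : ℝ) * ((k : ℝ) - (m : ℝ)) := by
        push_cast [Nat.cast_sub hmk]
        ring
      have h1 : (1:ℝ) ≤ (m:ℝ) := by exact_mod_cast h1m
      have h2 : (m:ℝ) ≤ (k:ℝ) - 1 := by
        have : ((m:ℕ):ℝ) ≤ ((k - 1 : ℕ) : ℝ) := by exact_mod_cast hmk1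
        rwa [Nat.cast_sub hk1, Nat.cast_one] at this
      rw [hcast]
      nlinarith [mul_nonneg (sub_nonneg.mpr h1) (sub_nonneg.mpr h2)]
  · -- Part 2: the spectral bound
    intro x hx
    by_cases hV : Fintype.card V = 0
    · -- V is empty
      haveI : IsEmpty V := Fintype.card_eq_zero_iff.mp hV
      have hA0 : ∀ i, (A i) = ∅ := fun i => Finset.eq_empty_of_isEmpty _
      have hpt : ∀ i j : ι, x i * L i j * x j = if i = j then x i ^ 2 else 0 := by
        intro i j
        rw [hL]
        by_cases h : i = j
        · subst h; simp; ring
        · simp [h, hA0]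
      have hRHS : ∑ i : ι, ∑ j : ι, x i * L i j * x j = ∑ i : ι, x i ^ 2 := by
        simp only [hpt]
        simp
      rw [hRHS, hV]
      simp only [Nat.cast_zero]
      norm_num
      positivity
    · -- V is nonempty
      have hVpos : 0 < Fintype.card V := Nat.pos_of_ne_zero hV
      set cV : ℝ := (Fintype.card V : ℝ) with hcV
      have hcV1 : (1:ℝ) ≤ cV := by
        have h1 : 1 ≤ Fintype.card V := hVpos
        rw [hcV]; exact_mod_cast h1
      have hk2 : (2:ℝ) ≤ (k:ℝ) := by exact_mod_cast hk
      have hkm1 : (0:ℝ) < (k:ℝ) - 1 := by linarith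
      -- every cell is nonempty
      have hA1 : ∀ i, 0 < (A i).card := by
        intro i0
        by_contra hle
        have hA0 : A i0 = ∅ := by
          rw [← Finset.card_eq_zero]; omega
        haveI : Nonempty V := Fintype.card_pos_iff.mp hVpos
        obtain ⟨v0⟩ := ‹Nonempty V›
        have hι2 : 1 < Fintype.card ι := by
          have h1 : (Finset.univ.filter fun i => v0 ∈ A i).card = k := hreg v0
          have h2 : (Finset.univ.filter fun i => v0 ∈ A i).card ≤ Fintype.card ι :=
            Finset.card_filter_le _ _
          omega
        obtain ⟨j, hj⟩ := Fintype.exists_ne_of_one_lt_card hι2 i0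
        obtain ⟨p⟩ := hconn.preconnected i0 j
        cases p with
        | nil => exact hj rfl
        | cons h q =>
          rw [SimpleGraph.fromRel_adj] at h
          rcases h.2 with h' | h'
          · rw [hA0] at h'; simp at h'
          · rw [hA0] at h'; simp at h'
      set a : ι → ℝ := fun i => ((A i).card : ℝ) with ha
      have ha1 : ∀ i, (1:ℝ) ≤ a i := by
        intro i
        have h1 : 1 ≤ (A i).card := hA1 i
        simp only [ha]
        exact_mod_cast h1
      have ha0 : ∀ i, (0:ℝ) < a i := fun i => lt_of_lt_of_le one_pos (ha1 i)
      set sa : ι → ℝ := fun i => Real.sqrt (a i) with hsadef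
      have hsa : ∀ i, 0 < sa i := fun i => Real.sqrt_pos.mpr (ha0 i)
      have hsasq : ∀ i, sa i * sa i = a i := fun i => Real.mul_self_sqrt (ha0 i).le
      set y : ι → ℝ := fun i => x i / sa i with hy
      have hxy : ∀ i, x i = sa i * y i := by
        intro i; simp only [hy]; field_simp [(hsa i).ne']
      set w : ι → ι → ℝ := fun i j => ((A i ∩ A j).card : ℝ) with hwdef
      have hw0 : ∀ i j, (0:ℝ) ≤ w i j := by intro i j; rw [hwdef]; exact Nat.cast_nonneg _
      have hwsymm : ∀ i j, w i j = w j i := by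
        intro i j; rw [hwdef]; simp [Finset.inter_comm]
      have hwii : ∀ i, w i i = a i := by
        intro i; rw [hwdef, ha]; simp
      -- counting identities
      have hcard : ∀ (s : Finset V), s.card = ∑ u : V, if u ∈ s then 1 else 0 := by
        intro s
        rw [← Finset.card_filter]
        congr 1
        ext u
        simp
      have hfilt : ∀ u : V, ∑ i : ι, (if u ∈ A i then 1 else 0) = k := by
        intro u
        rw [← Finset.card_filter]
        exact hreg u
      have hTnat : ∑ i : ι, (A i).card = k * Fintype.card V := by
        calc ∑ i : ι, (A i).card = ∑ i : ι, ∑ u : V, (if u ∈ A i then 1 else 0) := by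
              exact Finset.sum_congr rfl fun i _ => hcard (A i)
        _ = ∑ u : V, ∑ i : ι, (if u ∈ A i then 1 else 0) := Finset.sum_comm
        _ = ∑ _u : V, k := Finset.sum_congr rfl fun u _ => hfilt u
        _ = k * Fintype.card V := by simp [mul_comm]
      have hT : ∑ i : ι, a i = (k:ℝ) * cV := by
        simp only [ha, hcV]
        exact_mod_cast congrArg (Nat.cast : ℕ → ℝ) hTnat
      have hrownat : ∀ i, ∑ j : ι, (A i ∩ A j).card = k * (A i).card := by
        intro i
        calc ∑ j : ι, (A i ∩ A j).card
            = ∑ j : ι, ∑ u : V, (if u ∈ A i ∩ A j then 1 else 0) := by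
              exact Finset.sum_congr rfl fun j _ => hcard _
        _ = ∑ u : V, ∑ j : ι, (if u ∈ A i ∩ A j then 1 else 0) := Finset.sum_comm
        _ = ∑ u : V, (if u ∈ A i then k else 0) := by
              apply Finset.sum_congr rfl
              intro u _
              by_cases h : u ∈ A i
              · simp only [Finset.mem_inter, h, true_and, if_pos]
                exact hfilt u
              · simp [Finset.mem_inter, h]
        _ = ∑ u : V, k * (if u ∈ A i then 1 else 0) := by
              apply Finset.sum_congr rfl; intro u _; by_cases h : u ∈ A i <;> simp [h]
        _ = k * (A i).card := by rw [← Finset.mul_sum, ← hcard]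
      have hrow : ∀ i, ∑ j : ι, w i j = (k:ℝ) * a i := by
        intro i
        simp only [hwdef, ha]
        exact_mod_cast congrArg (Nat.cast : ℕ → ℝ) (hrownat i)
      -- main quantities
      set S2 : ℝ := ∑ i : ι, a i * y i ^ 2 with hS2def
      set C : ℝ := ∑ i : ι, ∑ j : ι, w i j * (y i * y j) with hCdef
      set Q : ℝ := ∑ i : ι, ∑ j : ι, w i j * (y i - y j) ^ 2 with hQdef
      have hS2nn : 0 ≤ S2 := Finset.sum_nonneg fun i _ => mul_nonneg (ha0 i).le (sq_nonneg _)
      have hQ0 : 0 ≤ Q := Finset.sum_nonneg fun i _ =>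
        Finset.sum_nonneg fun j _ => mul_nonneg (hw0 i j) (sq_nonneg _)
      -- the quadratic form
      have hpt : ∀ i j : ι, x i * L i j * x j =
          (if i = j then ((k:ℝ)/((k:ℝ)-1)) * (a i * y i ^ 2) else 0)
            - (1/((k:ℝ)-1)) * (w i j * (y i * y j)) := by
        intro i j
        rw [hL]
        by_cases h : i = j
        · subst h
          simp only [if_pos rfl, ↓reduceIte]
          rw [hwii i, hxy i, ← hsasq i]
          have hne : ((k:ℝ) - 1) ≠ 0 := hkm1.ne'
          field_simp
        · simp only [if_neg h]
          have hsqrt : Real.sqrt (((A i).card : ℝ) * ((A j).card : ℝ)) = sa i * sa j := by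
            rw [hsadef]
            exact Real.sqrt_mul (Nat.cast_nonneg _) _
          rw [hsqrt, hxy i, hxy j]
          have hi := (hsa i).ne'
          have hj := (hsa j).ne'
          rw [hwdef]
          field_simp
          ring
      have hRHS : ∑ i : ι, ∑ j : ι, x i * L i j * x j
          = ((k:ℝ)/((k:ℝ)-1)) * S2 - (1/((k:ℝ)-1)) * C := by
        calc ∑ i : ι, ∑ j : ι, x i * L i j * x j
            = ∑ i : ι, ∑ j : ι, ((if i = j then ((k:ℝ)/((k:ℝ)-1)) * (a i * y i ^ 2) else 0)
                - (1/((k:ℝ)-1)) * (w i j * (y i * y j))) := by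
              exact Finset.sum_congr rfl fun i _ => Finset.sum_congr rfl fun j _ => hpt i j
        _ = ∑ i : ι, ((∑ j : ι, (if i = j then ((k:ℝ)/((k:ℝ)-1)) * (a i * y i ^ 2) else 0))
                - ∑ j : ι, (1/((k:ℝ)-1)) * (w i j * (y i * y j))) := by
              exact Finset.sum_congr rfl fun i _ => Finset.sum_sub_distrib _ _
        _ = ∑ i : ι, (((k:ℝ)/((k:ℝ)-1)) * (a i * y i ^ 2)
                - (1/((k:ℝ)-1)) * ∑ j : ι, w i j * (y i * y j)) := by
              apply Finset.sum_congr rfl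
              intro i _
              rw [Finset.sum_ite_eq Finset.univ i
                (fun _ => ((k:ℝ)/((k:ℝ)-1)) * (a i * y i ^ 2))]
              simp [Finset.mul_sum]
        _ = ((k:ℝ)/((k:ℝ)-1)) * S2 - (1/((k:ℝ)-1)) * C := by
              rw [Finset.sum_sub_distrib, hS2def, hCdef, ← Finset.mul_sum, Finset.mul_sum]
              congr 1
              rw [← Finset.mul_sum]
      -- Q in terms of S2 and C
      have hA1' : ∑ i : ι, ∑ j : ι, w i j * y i ^ 2 = (k:ℝ) * S2 := by
        calc ∑ i : ι, ∑ j : ι, w i j * y i ^ 2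
            = ∑ i : ι, (∑ j : ι, w i j) * y i ^ 2 := by
              exact Finset.sum_congr rfl fun i _ => by rw [Finset.sum_mul]
        _ = ∑ i : ι, (k:ℝ) * (a i * y i ^ 2) := by
              exact Finset.sum_congr rfl fun i _ => by rw [hrow i]; ring
        _ = (k:ℝ) * S2 := by rw [← Finset.mul_sum, hS2def]
      have hA2' : ∑ i : ι, ∑ j : ι, w i j * y j ^ 2 = (k:ℝ) * S2 := by
        rw [Finset.sum_comm]
        calc ∑ j : ι, ∑ i : ι, w i j * y j ^ 2
            = ∑ j : ι, ∑ i : ι, w j i * y j ^ 2 := by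
              exact Finset.sum_congr rfl fun j _ => Finset.sum_congr rfl fun i _ => by
                rw [hwsymm i j]
        _ = (k:ℝ) * S2 := hA1'
      have hQS : Q = 2 * (k:ℝ) * S2 - 2 * C := by
        have hexp : Q = ∑ i : ι, ∑ j : ι,
            (w i j * y i ^ 2 + w i j * y j ^ 2 - 2 * (w i j * (y i * y j))) := by
          rw [hQdef]
          exact Finset.sum_congr rfl fun i _ => Finset.sum_congr rfl fun j _ => by ring
        rw [hexp]
        have : ∀ i : ι, ∑ j : ι,
            (w i j * y i ^ 2 + w i j * y j ^ 2 - 2 * (w i j * (y i * y j)))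
            = (∑ j : ι, w i j * y i ^ 2) + (∑ j : ι, w i j * y j ^ 2)
              - 2 * ∑ j : ι, w i j * (y i * y j) := by
          intro i
          rw [Finset.sum_sub_distrib, Finset.sum_add_distrib, Finset.mul_sum]
        rw [Finset.sum_congr rfl fun i _ => this i, Finset.sum_sub_distrib,
          Finset.sum_add_distrib, hA1', hA2', ← Finset.mul_sum, hCdef]
        ring
      -- the constraint
      have hconstr : ∑ i : ι, a i * y i = 0 := by
        have hpt2 : ∀ i : ι, a i * y i = Real.sqrt (((A i).card : ℝ)) * x i := by
          intro i
          rw [show Real.sqrt (((A i).card : ℝ)) = sa i from rfl, hxy i, ← hsasq i]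
          ring
        rw [Finset.sum_congr rfl fun i _ => hpt2 i, hx]
      have hxsq : ∑ i : ι, x i ^ 2 = S2 := by
        rw [hS2def]
        apply Finset.sum_congr rfl
        intro i _
        calc x i ^ 2 = (sa i * y i) ^ 2 := by rw [hxy i]
        _ = (sa i * sa i) * y i ^ 2 := by ring
        _ = a i * y i ^ 2 := by rw [hsasq i]
      -- variance identity
      have hB1 : ∑ i : ι, ∑ j : ι, a i * a j * y i ^ 2 = ((k:ℝ) * cV) * S2 := by
        calc ∑ i : ι, ∑ j : ι, a i * a j * y i ^ 2
            = ∑ i : ι, (a i * y i ^ 2) * (∑ j : ι, a j) := by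
              apply Finset.sum_congr rfl
              intro i _
              rw [Finset.mul_sum]
              exact Finset.sum_congr rfl fun j _ => by ring
        _ = ((k:ℝ) * cV) * S2 := by
              rw [← Finset.sum_mul, hS2def, hT]; ring
      have hB2 : ∑ i : ι, ∑ j : ι, a i * a j * y j ^ 2 = ((k:ℝ) * cV) * S2 := by
        rw [Finset.sum_comm]
        calc ∑ j : ι, ∑ i : ι, a i * a j * y j ^ 2
            = ∑ j : ι, ∑ i : ι, a j * a i * y j ^ 2 := by
              exact Finset.sum_congr rfl fun j _ => Finset.sum_congr rfl fun i _ => by ring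
        _ = ((k:ℝ) * cV) * S2 := hB1
      have hB3 : ∑ i : ι, ∑ j : ι, (a i * y i) * (a j * y j) = 0 := by
        calc ∑ i : ι, ∑ j : ι, (a i * y i) * (a j * y j)
            = ∑ i : ι, (a i * y i) * (∑ j : ι, a j * y j) := by
              exact Finset.sum_congr rfl fun i _ => by rw [Finset.mul_sum]
        _ = 0 := by rw [hconstr]; simp
      have hPvar : ∑ i : ι, ∑ j : ι, a i * a j * (y i - y j) ^ 2
          = 2 * ((k:ℝ) * cV) * S2 := by
        have hexp : ∑ i : ι, ∑ j : ι, a i * a j * (y i - y j) ^ 2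
            = ∑ i : ι, ∑ j : ι, (a i * a j * y i ^ 2 + a i * a j * y j ^ 2
                - 2 * ((a i * y i) * (a j * y j))) := by
          exact Finset.sum_congr rfl fun i _ => Finset.sum_congr rfl fun j _ => by ring
        have hsplit : ∀ i : ι, ∑ j : ι, (a i * a j * y i ^ 2 + a i * a j * y j ^ 2
                - 2 * ((a i * y i) * (a j * y j)))
            = (∑ j : ι, a i * a j * y i ^ 2) + (∑ j : ι, a i * a j * y j ^ 2)
              - 2 * ∑ j : ι, (a i * y i) * (a j * y j) := by
          intro i
          rw [Finset.sum_sub_distrib, Finset.sum_add_distrib, Finset.mul_sum]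
        rw [hexp, Finset.sum_congr rfl fun i _ => hsplit i, Finset.sum_sub_distrib,
          Finset.sum_add_distrib, hB1, hB2, ← Finset.mul_sum, hB3]
        ring
      -- the geodesic pair bound
      have hpair : ∀ i j : ι, (y i - y j) ^ 2 ≤ cV * (Q / 2) := by
        intro i j
        have := aux_pair_bound A hconn y i j
        rw [hQdef]
        simp only [hwdef]
        exact this
      have hPle : ∑ i : ι, ∑ j : ι, a i * a j * (y i - y j) ^ 2
          ≤ ((k:ℝ) * cV) * ((k:ℝ) * cV) * (cV * (Q / 2)) := by
        calc ∑ i : ι, ∑ j : ι, a i * a j * (y i - y j) ^ 2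
            ≤ ∑ i : ι, ∑ j : ι, a i * a j * (cV * (Q / 2)) := by
              apply Finset.sum_le_sum
              intro i _
              apply Finset.sum_le_sum
              intro j _
              exact mul_le_mul_of_nonneg_left (hpair i j)
                (mul_nonneg (ha0 i).le (ha0 j).le)
        _ = (∑ i : ι, a i) * ((∑ j : ι, a j) * (cV * (Q / 2))) := by
              rw [Finset.sum_mul]
              apply Finset.sum_congr rfl
              intro i _
              rw [Finset.sum_mul, Finset.mul_sum]
              exact Finset.sum_congr rfl fun j _ => by ring
        _ = ((k:ℝ) * cV) * ((k:ℝ) * cV) * (cV * (Q / 2)) := by rw [hT]; ring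
      have hkey : 2 * ((k:ℝ) * cV) * S2 ≤ ((k:ℝ) * cV) * ((k:ℝ) * cV) * (cV * (Q / 2)) := by
        rw [← hPvar]; exact hPle
      -- put everything together
      rw [hRHS, hxsq]
      have hCval : (k:ℝ)/((k:ℝ)-1) * S2 - 1/((k:ℝ)-1) * C = Q / (2 * ((k:ℝ)-1)) := by
        have hC : C = (k:ℝ) * S2 - Q / 2 := by linarith [hQS]
        rw [hC]
        field_simp
        ring
      rw [hCval]
      have hS2le : S2 ≤ (k:ℝ) * cV ^ 2 * Q / 4 := by
        have hkpos : (0:ℝ) < (k:ℝ) := by linarith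
        have hcVpos : (0:ℝ) < cV := by linarith
        have hpos : (0:ℝ) < 2 * ((k:ℝ) * cV) := by positivity
        have h' : S2 ≤ ((k:ℝ) * cV) * ((k:ℝ) * cV) * (cV * (Q / 2)) / (2 * ((k:ℝ) * cV)) := by
          rw [le_div_iff₀ hpos, mul_comm]
          exact hkey
        have heq : ((k:ℝ) * cV) * ((k:ℝ) * cV) * (cV * (Q / 2)) / (2 * ((k:ℝ) * cV))
            = (k:ℝ) * cV ^ 2 * Q / 4 := by
          field_simp
          ring
        linarith
      have step1 : 2 / ((k:ℝ)^2 * cV^2) * S2 ≤ Q / (2 * (k:ℝ)) := by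
        have h1 : 2 / ((k:ℝ)^2 * cV^2) * S2
            ≤ 2 / ((k:ℝ)^2 * cV^2) * ((k:ℝ) * cV ^ 2 * Q / 4) :=
          mul_le_mul_of_nonneg_left hS2le (by positivity)
        have h2 : 2 / ((k:ℝ)^2 * cV^2) * ((k:ℝ) * cV ^ 2 * Q / 4) = Q / (2 * (k:ℝ)) := by
          have hkne : (k:ℝ) ≠ 0 := by linarith
          have hcVne : cV ≠ 0 := by linarith
          field_simp
          ring
        linarith
      have step2 : Q / (2 * (k:ℝ)) ≤ Q / (2 * ((k:ℝ)-1)) := by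
        apply div_le_div_of_nonneg_left hQ0 (by linarith) (by linarith)
      linarith
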